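/- Let D be a classical relative entropy. Then for any three probability vectors p, q, r of the same dimension, D(p||q) ≤ D(p||r) + D_max(r||q), where D_max(r||q) = log_2 min{t ≥ 0 : t q_x ≥ r_x for all x}. -/

import Mathlib

open scoped BigOperators

def IsProbVec {ι : Type} [Fintype ι] (p : ι → ℝ) : Prop :=
  (∀ i, 0 ≤ p i) ∧ ∑ i, p i = 1

def IsStochastic {α β : Type} [Fintype α] [Fintype β] (E : Matrix α β ℝ) : Prop :=
  (∀ i j, 0 ≤ E i j) ∧ ∀ j, ∑ i, E i j = 1

def kron {m n : ℕ} (p : Fin m → ℝ) (q : Fin n → ℝ) : Fin (m * n) → ℝ :=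
  fun i => p (finProdFinEquiv.symm i).1 * q (finProdFinEquiv.symm i).2

lemma sum_fin_mul {m n : ℕ} (f : Fin (m * n) → ℝ) :
    ∑ i, f i = ∑ x : Fin m, ∑ y : Fin n, f (finProdFinEquiv (x, y)) := by
  rw [← Equiv.sum_comp finProdFinEquiv f, Fintype.sum_prod_type]

lemma kron_apply_equiv {m n : ℕ} (p : Fin m → ℝ) (q : Fin n → ℝ) (x : Fin m) (y : Fin n) :
    kron p q (finProdFinEquiv (x, y)) = p x * q y := by
  simp [kron]

lemma kron_prob {m n : ℕ} {p : Fin m → ℝ} {q : Fin n → ℝ}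
    (hp : IsProbVec p) (hq : IsProbVec q) : IsProbVec (kron p q) := by
  constructor
  · intro i
    exact mul_nonneg (hp.1 _) (hq.1 _)
  · rw [sum_fin_mul]
    simp only [kron_apply_equiv]
    rw [← Finset.sum_mul_sum, hp.2, hq.2, one_mul]

lemma fpfe_zero {m n : ℕ} [NeZero m] [NeZero n] :
    finProdFinEquiv ((0 : Fin m), (0 : Fin n)) = 0 := by
  apply Fin.ext
  simp [finProdFinEquiv]

lemma fpfe_symm_zero {m n : ℕ} [NeZero m] [NeZero n] :
    (finProdFinEquiv.symm (0 : Fin (m * n))) = ((0 : Fin m), (0 : Fin n)) := by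
  rw [← fpfe_zero (m := m) (n := n), Equiv.symm_apply_apply]

def pk : (k : ℕ) → (Fin 2 → ℝ) → Fin (2 ^ k) → ℝ
  | 0, _ => fun _ => 1
  | k + 1, v => kron (pk k v) v

lemma pk_succ (k : ℕ) (v : Fin 2 → ℝ) : pk (k + 1) v = kron (pk k v) v := rfl

lemma pk_prob {v : Fin 2 → ℝ} (hv : IsProbVec v) (k : ℕ) : IsProbVec (pk k v) := by
  induction k with
  | zero => exact ⟨fun _ => zero_le_one, by simp [pk]⟩
  | succ k ih => rw [pk_succ]; exact kron_prob ih hv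

instance {k : ℕ} : NeZero (2 ^ k) := ⟨by positivity⟩

lemma pk_zero {v : Fin 2 → ℝ} (k : ℕ) : pk k v 0 = (v 0) ^ k := by
  induction k with
  | zero => simp [pk]
  | succ k ih =>
    rw [pk_succ]; unfold kron
    show pk k v (finProdFinEquiv.symm (0 : Fin (2 ^ k * 2))).1 * v (finProdFinEquiv.symm (0 : Fin (2 ^ k * 2))).2 = _
    rw [fpfe_symm_zero (m := 2 ^ k) (n := 2), ih, pow_succ]

lemma pk_e1 (k : ℕ) (i : Fin (2 ^ k)) :
    pk k ![1, 0] i = if i = 0 then 1 else 0 := by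
  induction k with
  | zero =>
    have h0 : i = 0 := Fin.ext (by have := i.isLt; omega)
    simp [pk, h0]
  | succ k ih =>
    have e : pk (k + 1) ![1, 0] i =
        pk k ![1, 0] (finProdFinEquiv.symm i : Fin (2 ^ k) × Fin 2).1 *
          ![1, 0] (finProdFinEquiv.symm i : Fin (2 ^ k) × Fin 2).2 := rfl
    have h1 : ((finProdFinEquiv.symm i : Fin (2 ^ k) × Fin 2).1 : ℕ) = (i : ℕ) / 2 := rfl
    have h2 : ((finProdFinEquiv.symm i : Fin (2 ^ k) × Fin 2).2 : ℕ) = (i : ℕ) % 2 := rfl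
    have hz : ((0 : Fin (2 ^ (k + 1))) : ℕ) = 0 := rfl
    have hzk : ((0 : Fin (2 ^ k)) : ℕ) = 0 := rfl
    have hz2 : ((0 : Fin 2) : ℕ) = 0 := rfl
    have h12 : ((1 : Fin 2) : ℕ) = 1 := rfl
    rw [e, ih]
    by_cases h : i = 0
    · have hi0 : (i : ℕ) = 0 := by rw [h]; exact hz
      have ha : (finProdFinEquiv.symm i : Fin (2 ^ k) × Fin 2).1 = 0 := Fin.ext (by omega)
      have hb : (finProdFinEquiv.symm i : Fin (2 ^ k) × Fin 2).2 = 0 := Fin.ext (by omega)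
      rw [ha, hb, if_pos rfl, if_pos h]
      simp
    · have hi0 : (i : ℕ) ≠ 0 := fun hh => h (Fin.ext (by omega))
      rw [if_neg h]
      by_cases ha : (finProdFinEquiv.symm i : Fin (2 ^ k) × Fin 2).1 = 0
      · have hb : (finProdFinEquiv.symm i : Fin (2 ^ k) × Fin 2).2 = 1 := by
          have hav : ((finProdFinEquiv.symm i : Fin (2 ^ k) × Fin 2).1 : ℕ) = 0 := by
            rw [ha]; exact hzk
          apply Fin.ext
          omega
        rw [hb]
        simp
      · rw [if_neg ha, zero_mul]

lemma pk_const {v : Fin 2 → ℝ} {c : ℝ} (hv : ∀ j, v j = c) (k : ℕ) (i : Fin (2 ^ k)) :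
    pk k v i = c ^ k := by
  induction k with
  | zero => simp [pk]
  | succ k ih =>
    rw [pk_succ]; unfold kron; rw [ih, hv, pow_succ]
lemma prob_e1 : IsProbVec ![(1:ℝ), 0] := by
  constructor
  · intro i; fin_cases i <;> norm_num
  · simp [Fin.sum_univ_two]

lemma prob_half : IsProbVec ![(1:ℝ)/2, 1/2] := by
  constructor
  · intro i; fin_cases i <;> norm_num
  · norm_num [Fin.sum_univ_two]

lemma prob_one : IsProbVec (fun _ : Fin 1 => (1:ℝ)) := ⟨fun _ => zero_le_one, by simp⟩

lemma marginal_stoch {m n : ℕ} :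
    IsStochastic (fun (i : Fin m) (j : Fin (m * n)) =>
      if (finProdFinEquiv.symm j).1 = i then (1:ℝ) else 0) := by
  constructor
  · intro i j; dsimp only; split_ifs <;> norm_num
  · intro j
    rw [Finset.sum_ite_eq (Finset.univ) ((finProdFinEquiv.symm j).1) (fun _ => (1:ℝ))]
    simp

lemma marginal_mulVec {m n : ℕ} (v : Fin m → ℝ) (w : Fin n → ℝ) (hw : ∑ y, w y = 1) :
    Matrix.mulVec (fun (i : Fin m) (j : Fin (m * n)) =>
      if (finProdFinEquiv.symm j).1 = i then (1:ℝ) else 0) (kron v w) = v := by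
  funext i
  simp only [Matrix.mulVec, dotProduct]
  rw [sum_fin_mul (fun j => (if (finProdFinEquiv.symm j).1 = i then (1:ℝ) else 0) * kron v w j)]
  simp only [Equiv.symm_apply_apply, kron_apply_equiv]
  have : ∀ x : Fin m, ∑ y : Fin n,
      (if x = i then (1:ℝ) else 0) * (v x * w y) = (if x = i then (1:ℝ) else 0) * v x := by
    intro x
    rw [← Finset.mul_sum, ← Finset.mul_sum, hw, mul_one]
  simp only [this]
  simp only [ite_mul, one_mul, zero_mul]
  rw [Finset.sum_ite_eq' Finset.univ i v]
  simp

section D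
variable (D : ∀ n : ℕ, (Fin n → ℝ) → (Fin n → ℝ) → EReal)
  (hDPI : ∀ (n m : ℕ) (p q : Fin n → ℝ) (E : Matrix (Fin m) (Fin n) ℝ),
      IsProbVec p → IsProbVec q → IsStochastic E →
      D m (E.mulVec p) (E.mulVec q) ≤ D n p q)
  (hAdd : ∀ (n m : ℕ) (p q : Fin n → ℝ) (p' q' : Fin m → ℝ),
      IsProbVec p → IsProbVec q → IsProbVec p' → IsProbVec q' →
      D (n * m) (kron p p') (kron q q') = D n p q + D m p' q')
  (hNorm : D 2 ![1, 0] ![1/2, 1/2] = 1)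

include hDPI hAdd hNorm in
lemma noBot : ∀ (n : ℕ) (a b : Fin n → ℝ), IsProbVec a → IsProbVec b → D n a b ≠ ⊥ := by
  intro n a b ha hb hbot
  have hkp := kron_prob prob_e1 ha
  have hkq := kron_prob prob_half hb
  have h := hDPI (2 * n) 2 (kron ![1, 0] a) (kron ![1/2, 1/2] b)
    (fun i j => if (finProdFinEquiv.symm j).1 = i then (1:ℝ) else 0) hkp hkq marginal_stoch
  rw [marginal_mulVec _ _ ha.2, marginal_mulVec _ _ hb.2] at h
  rw [hAdd 2 n ![1, 0] ![1/2, 1/2] a b prob_e1 prob_half ha hb, hbot, EReal.add_bot, hNorm] at h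
  rw [le_bot_iff] at h
  rw [show (1 : EReal) = ((1:ℝ) : EReal) from rfl] at h
  exact EReal.coe_ne_bot 1 h

include hDPI hAdd hNorm in
lemma cZero : D 1 (fun _ => 1) (fun _ => 1) = 0 := by
  have hle : D 1 (fun _ => 1) (fun _ => 1) ≤ 1 := by
    have hme : Matrix.mulVec (fun (_ : Fin 1) (_ : Fin 2) => (1:ℝ)) ![1, 0]
        = (fun _ => 1) := by
      funext i
      simp [Matrix.mulVec, dotProduct, Fin.sum_univ_two]
    have hmh : Matrix.mulVec (fun (_ : Fin 1) (_ : Fin 2) => (1:ℝ)) ![1/2, 1/2]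
        = (fun _ => 1) := by
      funext i
      norm_num [Matrix.mulVec, dotProduct, Fin.sum_univ_two]
    have h := hDPI 2 1 ![1, 0] ![1/2, 1/2] (fun _ _ => (1:ℝ)) prob_e1 prob_half
      ⟨fun _ _ => zero_le_one, fun _ => by simp⟩
    rw [hme, hmh, hNorm] at h
    exact h
  have e0 : kron (fun _ : Fin 1 => (1:ℝ)) (fun _ : Fin 1 => (1:ℝ)) = (fun _ => 1) := by
    funext i; simp [kron]
  have h2 : D 1 (fun _ => 1) (fun _ => 1)
      = D 1 (fun _ => 1) (fun _ => 1) + D 1 (fun _ => 1) (fun _ => 1) := by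
    have := hAdd 1 1 (fun _ => 1) (fun _ => 1) (fun _ => 1) (fun _ => 1)
      prob_one prob_one prob_one prob_one
    rw [e0] at this
    exact this
  have hnb : D 1 (fun _ => 1) (fun _ => 1) ≠ ⊥ := noBot D hDPI hAdd hNorm 1 _ _ prob_one prob_one
  have hnt : D 1 (fun _ => 1) (fun _ => 1) ≠ ⊤ := by
    intro h
    rw [h, top_le_iff, show (1 : EReal) = ((1:ℝ) : EReal) from rfl] at hle
    exact EReal.coe_ne_top 1 hle
  obtain ⟨x, hx⟩ : ∃ r : ℝ, D 1 (fun _ => 1) (fun _ => 1) = (r : EReal) := by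
    generalize hE : D 1 (fun _ => 1) (fun _ => 1) = c at hnb hnt
    induction c using EReal.rec with
    | bot => exact absurd rfl hnb
    | coe r => exact ⟨r, rfl⟩
    | top => exact absurd rfl hnt
  rw [hx] at h2 ⊢
  rw [← EReal.coe_add, EReal.coe_eq_coe_iff] at h2
  have : x = 0 := by linarith
  rw [this, EReal.coe_zero]

include hDPI hAdd hNorm in
lemma pkD : ∀ (k : ℕ) (a b : Fin 2 → ℝ), IsProbVec a → IsProbVec b →
    D (2 ^ k) (pk k a) (pk k b) = k • (D 2 a b) := by
  intro k a b ha hb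
  induction k with
  | zero =>
    rw [zero_nsmul]
    exact cZero D hDPI hAdd hNorm
  | succ k ih =>
    have h := hAdd (2 ^ k) 2 (pk k a) (pk k b) a b (pk_prob ha k) (pk_prob hb k) ha hb
    rw [← pk_succ, ← pk_succ] at h
    rw [succ_nsmul, ← ih]
    exact h

end D
section D2
variable (D : ∀ n : ℕ, (Fin n → ℝ) → (Fin n → ℝ) → EReal)
  (hDPI : ∀ (n m : ℕ) (p q : Fin n → ℝ) (E : Matrix (Fin m) (Fin n) ℝ),
      IsProbVec p → IsProbVec q → IsStochastic E →
      D m (E.mulVec p) (E.mulVec q) ≤ D n p q)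
  (hAdd : ∀ (n m : ℕ) (p q : Fin n → ℝ) (p' q' : Fin m → ℝ),
      IsProbVec p → IsProbVec q → IsProbVec p' → IsProbVec q' →
      D (n * m) (kron p p') (kron q q') = D n p q + D m p' q')
  (hNorm : D 2 ![1, 0] ![1/2, 1/2] = 1)

include hDPI hAdd hNorm in
lemma lemB (t : ℝ) (ht : 1 < t) :
    D 2 ![1, 0] ![1/t, 1 - 1/t] ≤ ((Real.logb 2 t : ℝ) : EReal) := by
  have ht0 : (0:ℝ) < t := lt_trans one_pos ht
  have hu : IsProbVec ![1/t, 1 - 1/t] := by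
    constructor
    · intro i
      have h1t : 1/t ≤ 1 := by rw [div_le_one ht0]; exact le_of_lt ht
      fin_cases i
      · show (0:ℝ) ≤ 1/t
        positivity
      · show (0:ℝ) ≤ 1 - 1/t
        linarith
    · rw [Fin.sum_univ_two]
      simp
  -- Claim C
  have claimC : ∀ n k : ℕ, 1 ≤ n → 1 ≤ k → t ^ n ≤ 2 ^ k →
      n • D 2 ![1, 0] ![1/t, 1 - 1/t] ≤ (k • (1 : EReal)) := by
    intro n k _hn hk hcond
    set u : Fin 2 → ℝ := ![1/t, 1 - 1/t] with hu_def
    set μ : Fin (2 ^ n) → ℝ := pk n u with hμ_def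
    have hμ := pk_prob hu n
    have hμ0 : μ 0 = (1/t) ^ n := by
      rw [hμ_def, pk_zero, show u 0 = 1/t from rfl]
    have h2k1 : (0:ℝ) < 2 ^ k - 1 := by
      have : (2:ℝ) ^ 1 ≤ 2 ^ k := pow_le_pow_right₀ one_le_two hk
      norm_num at this
      linarith
    have hkey : 1 ≤ (2:ℝ) ^ k * μ 0 := by
      rw [hμ0]
      have h1 : (1:ℝ) ≤ 2 ^ k / t ^ n := (one_le_div (pow_pos ht0 n)).mpr hcond
      calc (1:ℝ) ≤ 2 ^ k / t ^ n := h1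
        _ = 2 ^ k * (1/t) ^ n := by
            rw [div_eq_mul_inv, ← inv_pow, ← one_div]
    set E : Matrix (Fin (2 ^ n)) (Fin (2 ^ k)) ℝ := fun i j =>
      if j = 0 then (if i = 0 then 1 else 0)
      else ((2:ℝ) ^ k * μ i - (if i = 0 then 1 else 0)) / ((2:ℝ) ^ k - 1) with hE_def
    have hEnn : ∀ i j, 0 ≤ E i j := by
      intro i j
      rw [hE_def]
      dsimp only
      split_ifs with h1 h2 h2
      · norm_num
      · norm_num
      · subst h2
        apply div_nonneg _ (le_of_lt h2k1)
        linarith [hkey]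
      · apply div_nonneg _ (le_of_lt h2k1)
        have := hμ.1 i
        have h2k : (0:ℝ) < 2 ^ k := by positivity
        nlinarith
    have hEcol : ∀ j, ∑ i, E i j = 1 := by
      intro j
      rw [hE_def]
      dsimp only
      by_cases hj : j = 0
      · simp only [if_pos hj]
        rw [Finset.sum_ite_eq' Finset.univ (0 : Fin (2 ^ n)) (fun _ => (1:ℝ))]
        simp
      · simp only [if_neg hj]
        rw [← Finset.sum_div]
        rw [Finset.sum_sub_distrib, ← Finset.mul_sum, hμ.2,
          Finset.sum_ite_eq' Finset.univ (0 : Fin (2 ^ n)) (fun _ => (1:ℝ))]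
        simp only [Finset.mem_univ, if_pos, mul_one]
        rw [div_eq_one_iff_eq (ne_of_gt h2k1)]
    have hEstoch : IsStochastic E := ⟨hEnn, hEcol⟩
    -- mulVec on pk k ![1,0]
    have hE1 : E.mulVec (pk k ![1, 0]) = pk n ![1, 0] := by
      funext i
      simp only [Matrix.mulVec, dotProduct]
      have : ∀ j : Fin (2 ^ k), E i j * pk k ![1, 0] j = if j = 0 then E i j else 0 := by
        intro j
        rw [pk_e1]
        split_ifs <;> simp
      simp only [this]
      rw [Finset.sum_ite_eq' Finset.univ (0 : Fin (2 ^ k)) (E i)]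
      simp only [Finset.mem_univ, if_pos]
      rw [hE_def]
      dsimp only
      rw [if_pos rfl, pk_e1]
    -- mulVec on pk k ![1/2,1/2]
    have hEh : E.mulVec (pk k ![1/2, 1/2]) = pk n u := by
      funext i
      simp only [Matrix.mulVec, dotProduct]
      have hhalf : ∀ j : Fin 2, (![1/2, 1/2] : Fin 2 → ℝ) j = 1/2 := by
        intro j; fin_cases j <;> norm_num
      have hconst : ∀ j : Fin (2 ^ k), pk k ![1/2, 1/2] j = (1/2 : ℝ) ^ k :=
        pk_const hhalf k
      simp only [hconst]
      rw [← Finset.sum_mul]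
      set A : ℝ := if i = 0 then 1 else 0 with hA_def
      set w : ℝ := ((2:ℝ) ^ k * μ i - A) / ((2:ℝ) ^ k - 1) with hw_def
      have hsum : ∑ j : Fin (2 ^ k), E i j = (A - w) + (2:ℝ) ^ k * w := by
        have : ∀ j : Fin (2 ^ k), E i j = (if j = 0 then A - w else 0) + w := by
          intro j
          rw [hE_def]
          dsimp only
          rw [← hA_def, ← hw_def]
          split_ifs with h
          · ring
          · ring
        rw [Finset.sum_congr rfl (fun j _ => this j), Finset.sum_add_distrib,
          Finset.sum_ite_eq' Finset.univ (0 : Fin (2 ^ k)) (fun _ => A - w),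
          Finset.sum_const, Finset.card_univ, Fintype.card_fin, nsmul_eq_mul]
        simp only [Finset.mem_univ, if_pos]
        push_cast
        ring
      rw [hsum]
      have hwc : w * ((2:ℝ) ^ k - 1) = (2:ℝ) ^ k * μ i - A :=
        div_mul_cancel₀ _ (ne_of_gt h2k1)
      have e1 : (A - w) + (2:ℝ) ^ k * w = (2:ℝ) ^ k * μ i := by nlinarith [hwc]
      rw [e1]
      have : ((1:ℝ)/2) ^ k = ((2:ℝ) ^ k)⁻¹ := by
        rw [one_div, inv_pow]
      rw [this, mul_comm ((2:ℝ) ^ k) (μ i), mul_assoc,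
        mul_inv_cancel₀ (by positivity : ((2:ℝ) ^ k) ≠ 0), mul_one]
    have step := hDPI (2 ^ k) (2 ^ n) (pk k ![1, 0]) (pk k ![1/2, 1/2]) E
      (pk_prob prob_e1 k) (pk_prob prob_half k) hEstoch
    rw [hE1, hEh] at step
    rw [pkD D hDPI hAdd hNorm n ![1, 0] u prob_e1 hu,
      pkD D hDPI hAdd hNorm k ![1, 0] ![1/2, 1/2] prob_e1 prob_half, hNorm] at step
    exact step
  -- now the limiting argument
  set X := D 2 ![1, 0] ![1/t, 1 - 1/t] with hX_def
  have hXbot : X ≠ ⊥ := noBot D hDPI hAdd hNorm 2 _ _ prob_e1 hu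
  have hsmul_coe : ∀ (k : ℕ), (k • (1 : EReal)) = ((k : ℝ) : EReal) := by
    intro k
    rw [show (1 : EReal) = ((1:ℝ) : EReal) from rfl, ← EReal.coe_nsmul]
    norm_num
  have hXtop : X ≠ ⊤ := by
    obtain ⟨k0, hk0⟩ := pow_unbounded_of_one_lt t (one_lt_two (α := ℝ))
    have hk : t ^ 1 ≤ 2 ^ (k0 + 1) := by
      have h1 : (2:ℝ) ^ k0 ≤ 2 ^ (k0 + 1) := pow_le_pow_right₀ one_le_two (Nat.le_succ _)
      rw [pow_one]
      linarith [le_of_lt hk0]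
    have := claimC 1 (k0 + 1) le_rfl (Nat.le_add_left 1 k0) hk
    rw [one_nsmul, hsmul_coe] at this
    intro htop
    rw [htop, top_le_iff] at this
    exact EReal.coe_ne_top _ this
  obtain ⟨x, hx⟩ : ∃ r : ℝ, X = (r : EReal) := by
    generalize hE : X = c at hXbot hXtop
    induction c using EReal.rec with
    | bot => exact absurd rfl hXbot
    | coe r => exact ⟨r, rfl⟩
    | top => exact absurd rfl hXtop
  have hlogpos : 0 < Real.logb 2 t := Real.logb_pos one_lt_two ht
  have hbound : ∀ N : ℕ, 1 ≤ N → x ≤ Real.logb 2 t + 1 / N := by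
    intro N hN
    set k := ⌈(N : ℝ) * Real.logb 2 t⌉₊ with hk_def
    have hNpos : (0:ℝ) < N := by exact_mod_cast hN
    have hk1 : 1 ≤ k := by
      have := Nat.ceil_pos.mpr (mul_pos hNpos hlogpos)
      omega
    have hcond : t ^ N ≤ 2 ^ k := by
      have hle : Real.logb 2 (t ^ N) ≤ (k : ℝ) := by
        rw [Real.logb_pow]
        exact Nat.le_ceil _
      have h2 := (Real.logb_le_iff_le_rpow (by norm_num : (1:ℝ) < 2)
        (by positivity : (0:ℝ) < t ^ N)).mp hle
      rwa [Real.rpow_natCast] at h2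
    have hC := claimC N k hN hk1 hcond
    rw [hx, ← EReal.coe_nsmul, hsmul_coe, EReal.coe_le_coe_iff] at hC
    rw [nsmul_eq_mul] at hC
    have hkup : (k : ℝ) < (N : ℝ) * Real.logb 2 t + 1 :=
      Nat.ceil_lt_add_one (by positivity)
    have h1N : (N:ℝ) * (1 / N) = 1 := by field_simp
    nlinarith [hC, hkup, hNpos]
  have hxle : x ≤ Real.logb 2 t := by
    by_contra hlt
    push_neg at hlt
    obtain ⟨N, hNlt⟩ := exists_nat_one_div_lt (show 0 < x - Real.logb 2 t by linarith)
    have := hbound (N + 1) (Nat.le_add_left 1 N)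
    have hcast : ((N + 1 : ℕ) : ℝ) = (N : ℝ) + 1 := by push_cast; ring
    rw [hcast] at this
    linarith
  rw [hx]
  exact EReal.coe_le_coe_iff.mpr hxle

end D2
-- `D_max(r‖q) = log₂ min {t ≥ 0 : t q ≥ r}`, `⊤` if `supp r ⊄ supp q`.
open Classical in
noncomputable def DmaxCl {n : ℕ} (r q : Fin n → ℝ) : EReal :=
  if ∃ t : ℝ, 0 ≤ t ∧ ∀ x, r x ≤ t * q x
  then ((Real.logb 2 (sInf {t : ℝ | 0 ≤ t ∧ ∀ x, r x ≤ t * q x}) : ℝ) : EReal)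
  else ⊤
/-- Triangle-type inequality: `D(p‖q) ≤ D(p‖r) + D_max(r‖q)` for any classical
relative entropy `D`. -/
theorem stmt2
    (D : ∀ n : ℕ, (Fin n → ℝ) → (Fin n → ℝ) → EReal)
    (hDPI : ∀ (n m : ℕ) (p q : Fin n → ℝ) (E : Matrix (Fin m) (Fin n) ℝ),
      IsProbVec p → IsProbVec q → IsStochastic E →
      D m (E.mulVec p) (E.mulVec q) ≤ D n p q)
    (hAdd : ∀ (n m : ℕ) (p q : Fin n → ℝ) (p' q' : Fin m → ℝ),
      IsProbVec p → IsProbVec q → IsProbVec p' → IsProbVec q' →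
      D (n * m) (kron p p') (kron q q') = D n p q + D m p' q')
    (hNorm : D 2 ![1, 0] ![1/2, 1/2] = 1) :
    ∀ (n : ℕ) (p q r : Fin n → ℝ), IsProbVec p → IsProbVec q → IsProbVec r →
      D n p q ≤ D n p r + DmaxCl r q := by
  intro n p q r hp hq hr
  have hprb : D n p r ≠ ⊥ := noBot D hDPI hAdd hNorm n p r hp hr
  by_cases hS : ∃ t : ℝ, 0 ≤ t ∧ ∀ x, r x ≤ t * q x
  · simp only [DmaxCl, if_pos hS]
    have hne : {t : ℝ | 0 ≤ t ∧ ∀ x, r x ≤ t * q x}.Nonempty := hS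
    have hbdd : BddBelow {t : ℝ | 0 ≤ t ∧ ∀ x, r x ≤ t * q x} :=
      ⟨0, fun y hy => hy.1⟩
    set t := sInf {t : ℝ | 0 ≤ t ∧ ∀ x, r x ≤ t * q x} with ht_def
    have ht_mem : 0 ≤ t ∧ ∀ x, r x ≤ t * q x := by
      constructor
      · exact le_csInf hne (fun b hb => hb.1)
      · intro x
        rcases le_or_gt (q x) 0 with hqx | hqx
        · have hq0 : q x = 0 := le_antisymm hqx (hq.1 x)
          obtain ⟨t0, ht0⟩ := hS
          have := ht0.2 x
          rw [hq0, mul_zero] at this ⊢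
          exact this
        · have hdiv : r x / q x ≤ t :=
            le_csInf hne (fun b hb => (div_le_iff₀ hqx).mpr (by
              have := hb.2 x; linarith [this]))
          exact (div_le_iff₀ hqx).mp hdiv
    have ht1 : 1 ≤ t := by
      have hsum : ∑ x, r x ≤ ∑ x, t * q x :=
        Finset.sum_le_sum (fun x _ => ht_mem.2 x)
      rw [hr.2, ← Finset.mul_sum, hq.2, mul_one] at hsum
      exact hsum
    rcases eq_or_lt_of_le ht1 with heq | hlt
    · -- t = 1 : then r = q
      have hle : ∀ x, r x ≤ q x := by
        intro x
        have := ht_mem.2 x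
        rw [← heq, one_mul] at this
        exact this
      have hrq : r = q := by
        funext x
        exact (Finset.sum_eq_sum_iff_of_le (fun i _ => hle i)).mp
          (hr.2.trans hq.2.symm) x (Finset.mem_univ x)
      rw [hrq, ← heq, Real.logb_one, EReal.coe_zero, add_zero]
    · -- 1 < t
      have ht0 : (0:ℝ) < t := lt_trans one_pos hlt
      have ht1' : (0:ℝ) < t - 1 := by linarith
      have hu : IsProbVec ![1/t, 1 - 1/t] := by
        constructor
        · intro i
          have h1t : 1/t ≤ 1 := by rw [div_le_one ht0]; exact le_of_lt hlt
          fin_cases i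
          · show (0:ℝ) ≤ 1/t
            positivity
          · show (0:ℝ) ≤ 1 - 1/t
            linarith
        · rw [Fin.sum_univ_two]
          simp
      set s' : Fin n → ℝ := fun i => (t * q i - r i) / (t - 1) with hs'_def
      have hs' : IsProbVec s' := by
        constructor
        · intro i
          apply div_nonneg _ (le_of_lt ht1')
          have := ht_mem.2 i
          linarith
        · rw [hs'_def]
          dsimp only
          rw [← Finset.sum_div, Finset.sum_sub_distrib, ← Finset.mul_sum, hq.2, hr.2, mul_one,
            div_eq_one_iff_eq (ne_of_gt ht1')]
      set E : Matrix (Fin n) (Fin (n * 2)) ℝ := fun i j =>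
        if (finProdFinEquiv.symm j).2 = 0 then (if i = (finProdFinEquiv.symm j).1 then 1 else 0)
        else s' i with hE_def
      have hEstoch : IsStochastic E := by
        constructor
        · intro i j
          rw [hE_def]
          dsimp only
          split_ifs
          · norm_num
          · norm_num
          · exact hs'.1 i
        · intro j
          rw [hE_def]
          dsimp only
          by_cases hb : (finProdFinEquiv.symm j).2 = 0
          · simp only [if_pos hb]
            rw [Finset.sum_ite_eq' Finset.univ ((finProdFinEquiv.symm j).1) (fun _ => (1:ℝ))]
            simp
          · simp only [if_neg hb]
            exact hs'.2
      have hmv1 : E.mulVec (kron p ![1, 0]) = p := by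
        funext i
        simp only [Matrix.mulVec, dotProduct]
        rw [sum_fin_mul (fun j => E i j * kron p ![1, 0] j)]
        have hterm : ∀ (x : Fin n) (y : Fin 2),
            E i (finProdFinEquiv (x, y)) * kron p ![1, 0] (finProdFinEquiv (x, y))
            = (if y = 0 then (if i = x then 1 else 0) else s' i) * (p x * ![1, 0] y) := by
          intro x y
          rw [kron_apply_equiv, hE_def]
          dsimp only
          rw [Equiv.symm_apply_apply]
        simp only [hterm]
        have hinner : ∀ x : Fin n, ∑ y : Fin 2,
            (if y = 0 then (if i = x then 1 else 0) else s' i) * (p x * ![1, 0] y)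
            = (if i = x then 1 else 0) * p x := by
          intro x
          rw [Fin.sum_univ_two]
          norm_num
        simp only [hinner]
        simp only [ite_mul, one_mul, zero_mul]
        rw [Finset.sum_ite_eq Finset.univ i p]
        simp
      have hmv2 : E.mulVec (kron r ![1/t, 1 - 1/t]) = q := by
        funext i
        simp only [Matrix.mulVec, dotProduct]
        rw [sum_fin_mul (fun j => E i j * kron r ![1/t, 1 - 1/t] j)]
        have hterm : ∀ (x : Fin n) (y : Fin 2),
            E i (finProdFinEquiv (x, y)) * kron r ![1/t, 1 - 1/t] (finProdFinEquiv (x, y))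
            = (if y = 0 then (if i = x then 1 else 0) else s' i)
              * (r x * ![1/t, 1 - 1/t] y) := by
          intro x y
          rw [kron_apply_equiv, hE_def]
          dsimp only
          rw [Equiv.symm_apply_apply]
        simp only [hterm]
        have hinner : ∀ x : Fin n, ∑ y : Fin 2,
            (if y = 0 then (if i = x then 1 else 0) else s' i) * (r x * ![1/t, 1 - 1/t] y)
            = (if i = x then 1 else 0) * (r x * (1/t)) + s' i * (r x * (1 - 1/t)) := by
          intro x
          rw [Fin.sum_univ_two]
          norm_num
        simp only [hinner]
        rw [Finset.sum_add_distrib]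
        simp only [ite_mul, one_mul, zero_mul]
        rw [Finset.sum_ite_eq Finset.univ i (fun x => r x * (1/t))]
        simp only [Finset.mem_univ, if_pos]
        have hsum2 : ∑ x : Fin n, s' i * (r x * (1 - 1/t)) = s' i * (1 - 1/t) := by
          rw [← Finset.mul_sum]
          have : ∑ x : Fin n, r x * (1 - 1/t) = 1 - 1/t := by
            rw [← Finset.sum_mul, hr.2, one_mul]
          rw [this]
        rw [hsum2, hs'_def]
        dsimp only
        field_simp
        ring
      have hkp := kron_prob hp prob_e1
      have hkr := kron_prob hr hu
      have step := hDPI (n * 2) n (kron p ![1, 0]) (kron r ![1/t, 1 - 1/t]) E hkp hkr hEstoch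
      rw [hmv1, hmv2] at step
      rw [hAdd n 2 p r ![1, 0] ![1/t, 1 - 1/t] hp hr prob_e1 hu] at step
      have hB := lemB D hDPI hAdd hNorm t hlt
      calc D n p q ≤ D n p r + D 2 ![1, 0] ![1/t, 1 - 1/t] := step
        _ ≤ D n p r + ((Real.logb 2 t : ℝ) : EReal) := add_le_add_right hB _
  · rw [DmaxCl, if_neg hS, EReal.add_top_of_ne_bot hprb]
    exact le_top
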